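/- If A ⊆ L⁰₊ is convex, solid, and radially bounded, then its closure in the topology of convergence in probability is also radially bounded. -/

import Mathlib

open MeasureTheory Filter

variable {Ω : Type*} [MeasurableSpace Ω]

/-- `A ⊆ L⁰₊` is solid: `X ∈ A` and `0 ≤ Y ≤ X` (a.e.) imply `Y ∈ A`. -/
def Solid (P : Measure Ω) (A : Set (Ω → ℝ)) : Prop :=
  ∀ X ∈ A, ∀ Y : Ω → ℝ, (∀ᵐ ω ∂P, 0 ≤ Y ω ∧ Y ω ≤ X ω) → Y ∈ A

/-- Radial boundedness for a set of positive random variables: every ray through a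
nonzero element eventually leaves the set. -/
def RadiallyBoundedPos (P : Measure Ω) (A : Set (Ω → ℝ)) : Prop :=
  ∀ X ∈ A, P {ω | 0 < X ω} ≠ 0 →
    ∃ Λ > (0 : ℝ), ∀ l : ℝ, Λ < l → (fun ω => l * X ω) ∉ A

/-- Tightness (boundedness in probability) for a set of positive random variables. -/
def TightPos (P : Measure Ω) (A : Set (Ω → ℝ)) : Prop :=
  ∀ ε > (0 : ℝ), ∃ M > (0 : ℝ), ∀ X ∈ A, P {ω | M < X ω} < ENNReal.ofReal ε

/-- Radial boundedness for a general set of random variables. -/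
def RadiallyBounded (P : Measure Ω) (A : Set (Ω → ℝ)) : Prop :=
  ∀ X ∈ A, P {ω | X ω ≠ 0} ≠ 0 →
    ∃ Λ > (0 : ℝ), ∀ l : ℝ, Λ < l → (fun ω => l * X ω) ∉ A

/-- Tightness (boundedness in probability) for a general set of random variables. -/
def Tight (P : Measure Ω) (A : Set (Ω → ℝ)) : Prop :=
  ∀ ε > (0 : ℝ), ∃ M > (0 : ℝ), ∀ X ∈ A, P {ω | M < |X ω|} < ENNReal.ofReal ε

/-- Membership in the closure of `A` for the (metrizable) topology of convergence
in probability. -/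
def InClosure (P : Measure Ω) (A : Set (Ω → ℝ)) (X : Ω → ℝ) : Prop :=
  ∃ Y : ℕ → Ω → ℝ, (∀ n, Y n ∈ A) ∧ TendstoInMeasure P Y atTop X

namespace Stmt1Aux

open Set ENNReal

/-- The "asymptotic unboundedness mass" of `A` on a set `B`. -/
noncomputable def gam (P : Measure Ω) (A : Set (Ω → ℝ)) (B : Set Ω) : ℝ≥0∞ :=
  ⨅ M : ℕ, ⨆ X ∈ A, P (B ∩ {ω | (M : ℝ) < X ω})

variable {P : Measure Ω} {A : Set (Ω → ℝ)}

lemma gam_mono {B B' : Set Ω} (h : B ⊆ B') : gam P A B ≤ gam P A B' := by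
  refine iInf_mono fun M => iSup_mono fun X => iSup_mono fun _ =>
    measure_mono (Set.inter_subset_inter_left _ h)

lemma gam_le_measure (B : Set Ω) : gam P A B ≤ P B :=
  (iInf_le _ 0).trans (iSup₂_le fun X _ => measure_mono Set.inter_subset_left)

lemma gam_ne_top [IsProbabilityMeasure P] (B : Set Ω) : gam P A B ≠ ⊤ :=
  ((gam_le_measure B).trans_lt (measure_lt_top P B)).ne

lemma gam_le_add (B B' : Set Ω) : gam P A B ≤ gam P A B' + P (B \ B') := by
  have h : ∀ M : ℕ, (⨆ X ∈ A, P (B ∩ {ω | (M : ℝ) < X ω}))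
      ≤ (⨆ X ∈ A, P (B' ∩ {ω | (M : ℝ) < X ω})) + P (B \ B') := by
    intro M
    refine iSup₂_le fun X hX => ?_
    have h1 : B ∩ {ω | (M : ℝ) < X ω} ⊆ (B' ∩ {ω | (M : ℝ) < X ω}) ∪ (B \ B') := by
      intro ω ⟨h1, h2⟩
      by_cases hb : ω ∈ B'
      · exact Or.inl ⟨hb, h2⟩
      · exact Or.inr ⟨h1, hb⟩
    refine (measure_mono h1).trans ((measure_union_le _ _).trans ?_)
    exact add_le_add_left (le_iSup₂ (f := fun X (_ : X ∈ A) => P (B' ∩ {ω | (M : ℝ) < X ω})) X hX) _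
  calc gam P A B ≤ ⨅ M : ℕ, ((⨆ X ∈ A, P (B' ∩ {ω | (M : ℝ) < X ω})) + P (B \ B')) :=
        le_iInf fun M => (iInf_le _ M).trans (h M)
    _ = gam P A B' + P (B \ B') := by rw [gam, ENNReal.iInf_add]

lemma gam_union (B B' : Set Ω) : gam P A (B ∪ B') ≤ gam P A B + gam P A B' := by
  have key : ∀ M N : ℕ, gam P A (B ∪ B') ≤
      (⨆ X ∈ A, P (B ∩ {ω | (M : ℝ) < X ω})) + (⨆ X ∈ A, P (B' ∩ {ω | (N : ℝ) < X ω})) := by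
    intro M N
    refine (iInf_le _ (max M N)).trans (iSup₂_le fun X hX => ?_)
    have h1 : (B ∪ B') ∩ {ω | ((max M N : ℕ) : ℝ) < X ω} ⊆
        (B ∩ {ω | (M : ℝ) < X ω}) ∪ (B' ∩ {ω | (N : ℝ) < X ω}) := by
      intro ω ⟨h1, h2⟩
      have hM : (M : ℝ) ≤ ((max M N : ℕ) : ℝ) := by exact_mod_cast Nat.le_max_left M N
      have hN : (N : ℝ) ≤ ((max M N : ℕ) : ℝ) := by exact_mod_cast Nat.le_max_right M N
      rcases h1 with h1 | h1
      · exact Or.inl ⟨h1, lt_of_le_of_lt hM h2⟩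
      · exact Or.inr ⟨h1, lt_of_le_of_lt hN h2⟩
    refine (measure_mono h1).trans ((measure_union_le _ _).trans ?_)
    exact add_le_add
      (le_iSup₂ (f := fun X (_ : X ∈ A) => P (B ∩ {ω | (M : ℝ) < X ω})) X hX)
      (le_iSup₂ (f := fun X (_ : X ∈ A) => P (B' ∩ {ω | (N : ℝ) < X ω})) X hX)
  have : gam P A (B ∪ B') ≤ ⨅ M : ℕ, ⨅ N : ℕ,
      ((⨆ X ∈ A, P (B ∩ {ω | (M : ℝ) < X ω})) + (⨆ X ∈ A, P (B' ∩ {ω | (N : ℝ) < X ω}))) :=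
    le_iInf fun M => le_iInf fun N => key M N
  refine this.trans ?_
  rw [gam, gam, ENNReal.iInf_add]
  exact iInf_mono fun M => by rw [ENNReal.add_iInf]

lemma gam_pick [IsProbabilityMeasure P] {B : Set Ω} (h : gam P A B ≠ 0) (M : ℕ) :
    ∃ X ∈ A, gam P A B / 2 < P (B ∩ {ω | (M : ℝ) < X ω}) := by
  have h1 : gam P A B / 2 < gam P A B := ENNReal.half_lt_self h (gam_ne_top B)
  have h2 : gam P A B ≤ ⨆ X ∈ A, P (B ∩ {ω | (M : ℝ) < X ω}) := iInf_le _ M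
  have h3 : gam P A B / 2 < ⨆ X ∈ A, P (B ∩ {ω | (M : ℝ) < X ω}) := h1.trans_le h2
  rw [lt_iSup_iff] at h3
  obtain ⟨X, hX⟩ := h3
  rw [lt_iSup_iff] at hX
  obtain ⟨hXA, hP⟩ := hX
  exact ⟨X, hXA, hP⟩

end Stmt1Aux

namespace Stmt1Aux
open Set ENNReal

theorem key_tight (P : Measure Ω) [IsProbabilityMeasure P] (A : Set (Ω → ℝ))
    (hL0 : ∀ X ∈ A, AEMeasurable X P) (hpos : ∀ X ∈ A, ∀ᵐ ω ∂P, 0 ≤ X ω)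
    (hconv : Convex ℝ A) (hsolid : Solid P A) (hrb : RadiallyBoundedPos P A) :
    TightPos P A := by
  rcases Set.eq_empty_or_nonempty A with hA | ⟨X₀, hX₀⟩
  · intro ε hε; exact ⟨1, one_pos, fun X hX => by simp [hA] at hX⟩
  have h0 : (0 : Ω → ℝ) ∈ A := by
    refine hsolid X₀ hX₀ 0 ?_
    filter_upwards [hpos X₀ hX₀] with ω h
    exact ⟨le_refl 0, h⟩
  by_contra hT
  rw [TightPos] at hT
  push_neg at hT
  obtain ⟨ε, hε, hMε⟩ := hT
  -- γ on the whole space is at least ε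
  have hγuniv : ENNReal.ofReal ε ≤ gam P A Set.univ := by
    refine le_iInf fun M => ?_
    obtain ⟨X, hXA, hle⟩ := hMε ((M : ℝ) + 1) (by positivity)
    refine hle.trans ((measure_mono ?_).trans
      (le_iSup₂ (f := fun X (_ : X ∈ A) => P (Set.univ ∩ {ω | (M : ℝ) < X ω})) X hXA))
    intro ω h
    simp only [Set.mem_setOf_eq] at h
    refine ⟨trivial, ?_⟩
    simp only [Set.mem_setOf_eq]
    linarith
  -- Stage 1 : extraction of the hereditarily unbounded part
  set T : Set (Set Ω) := {B | MeasurableSet B ∧ gam P A B = 0} with hTdef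
  set t : ℝ≥0∞ := ⨆ B ∈ T, P B with htdef
  have hempty : ∅ ∈ T :=
    ⟨MeasurableSet.empty, le_antisymm ((gam_le_measure _).trans (by simp)) (zero_le)⟩
  have httop : t ≠ ⊤ := ((iSup₂_le fun B _ => prob_le_one).trans_lt ENNReal.one_lt_top).ne
  have hchoose : ∀ n : ℕ, ∃ B ∈ T, t ≤ P B + (↑(n+1) : ℝ≥0∞)⁻¹ := by
    intro n
    by_cases hc : t ≤ (↑(n+1) : ℝ≥0∞)⁻¹
    · exact ⟨∅, hempty, by simpa using hc⟩
    · push_neg at hc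
      have hinv : ((↑(n+1) : ℝ≥0∞))⁻¹ ≠ 0 := ENNReal.inv_ne_zero.2 (ENNReal.natCast_ne_top _)
      have ht0 : t ≠ 0 := by intro h; rw [h] at hc; exact hinv (le_antisymm hc.le (zero_le))
      have hlt : t - (↑(n+1) : ℝ≥0∞)⁻¹ < t := ENNReal.sub_lt_self httop ht0 hinv
      rw [htdef, lt_iSup_iff] at hlt
      obtain ⟨B, hB⟩ := hlt
      rw [lt_iSup_iff] at hB
      obtain ⟨hBT, hBP⟩ := hB
      rw [← htdef] at hBP
      exact ⟨B, hBT, tsub_le_iff_right.mp hBP.le⟩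
  choose B hBT hBle using hchoose
  set F : ℕ → Set Ω := fun n => ⋃ i ∈ Finset.range (n+1), B i with hFdef
  have hFT : ∀ n, F n ∈ T := by
    intro n
    induction n with
    | zero => simpa [hFdef] using hBT 0
    | succ n ih =>
      have : F (n+1) = F n ∪ B (n+1) := by
        rw [hFdef]
        simp only [Finset.range_add_one (n := n+1), Finset.set_biUnion_insert]
        rw [Set.union_comm]
      rw [this]
      exact ⟨ih.1.union (hBT (n+1)).1,
        le_antisymm ((gam_union _ _).trans (by rw [ih.2, (hBT (n+1)).2, add_zero])) (zero_le)⟩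
  have hFmono : Monotone F := by
    intro m n hmn ω hω
    rw [hFdef] at hω ⊢
    simp only [Set.mem_iUnion, Finset.mem_range] at hω ⊢
    obtain ⟨i, hi, h⟩ := hω
    exact ⟨i, by omega, h⟩
  set Ωb : Set Ω := ⋃ n, F n with hΩbdef
  have hΩbm : MeasurableSet Ωb := MeasurableSet.iUnion fun n => (hFT n).1
  have hγΩb : gam P A Ωb = 0 := by
    refine le_antisymm ?_ (zero_le)
    have h1 : ∀ n, gam P A Ωb ≤ P (Ωb \ F n) := fun n =>
      (gam_le_add _ _).trans_eq (by rw [(hFT n).2, zero_add])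
    have h2 : P (⋂ n, Ωb \ F n) = ⨅ n, P (Ωb \ F n) := by
      refine Antitone.measure_iInter ?_
        (fun n => (hΩbm.diff (hFT n).1).nullMeasurableSet) ⟨0, measure_ne_top P _⟩
      intro m n hmn
      exact Set.diff_subset_diff_right (hFmono hmn)
    have h3 : (⋂ n, Ωb \ F n) = ∅ := by
      rw [← Set.diff_iUnion, ← hΩbdef, Set.diff_self]
    rw [h3, measure_empty] at h2
    exact (le_iInf h1).trans_eq h2.symm
  have hΩbT : Ωb ∈ T := ⟨hΩbm, hγΩb⟩
  have hPΩb : P Ωb = t := by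
    refine le_antisymm (le_iSup₂ (f := fun B (_ : B ∈ T) => P B) Ωb hΩbT) ?_
    refine ENNReal.le_of_forall_pos_le_add fun d hd _ => ?_
    obtain ⟨n, hn⟩ := ENNReal.exists_inv_nat_lt (by exact_mod_cast hd.ne' : (d : ℝ≥0∞) ≠ 0)
    have hsub : B n ⊆ Ωb := by
      refine Set.subset_iUnion_of_subset n ?_
      rw [hFdef]
      exact Set.subset_biUnion_of_mem (Finset.self_mem_range_succ n)
    have hmono : ((↑(n+1) : ℝ≥0∞))⁻¹ ≤ ((n : ℝ≥0∞))⁻¹ := by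
      exact ENNReal.inv_le_inv' (by exact_mod_cast Nat.le_succ n)
    calc t ≤ P (B n) + (↑(n+1) : ℝ≥0∞)⁻¹ := hBle n
      _ ≤ P Ωb + (d : ℝ≥0∞) := add_le_add (measure_mono hsub) (hmono.trans hn.le)
  set Ωu : Set Ω := Ωbᶜ with hΩudef
  have hΩum : MeasurableSet Ωu := hΩbm.compl
  have hPΩu : P Ωu ≠ 0 := by
    intro h
    have h1 : gam P A Set.univ ≤ 0 := by
      have := gam_le_add (P := P) (A := A) Set.univ Ωb
      rw [hγΩb, zero_add] at this
      refine this.trans_eq ?_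
      rw [← Set.compl_eq_univ_diff, ← hΩudef, h]
    have h2 : ENNReal.ofReal ε ≠ 0 := by
      simp [ENNReal.ofReal_eq_zero, not_le, hε]
    exact h2 (le_antisymm (hγuniv.trans h1) (zero_le))
  have hher : ∀ D : Set Ω, MeasurableSet D → D ⊆ Ωu → P D ≠ 0 → gam P A D ≠ 0 := by
    intro D hDm hDsub hPD hγD
    have hmem : Ωb ∪ D ∈ T :=
      ⟨hΩbm.union hDm,
        le_antisymm ((gam_union _ _).trans (by rw [hγΩb, hγD, add_zero])) (zero_le)⟩
    have hle : P (Ωb ∪ D) ≤ t := le_iSup₂ (f := fun B (_ : B ∈ T) => P B) _ hmem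
    rw [measure_union (disjoint_compl_right.mono_right hDsub) hDm, hPΩb] at hle
    have : P D ≤ 0 := by
      have := (ENNReal.add_le_add_iff_left httop).mp (by simpa using hle : t + P D ≤ t + 0)
      exact this
    exact hPD (le_antisymm this (zero_le))
  -- Step function: carve a chunk of mass `gam/2` out of any measurable remainder
  have step : ∀ (c : ℕ) (R : Set Ω), ∃ D : Set Ω, MeasurableSet D ∧ D ⊆ R ∧
      Set.indicator D (fun _ => (c : ℝ)) ∈ A ∧
      (MeasurableSet R → gam P A R ≠ 0 → gam P A R / 2 ≤ P D) := by
    intro c R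
    by_cases hR : gam P A R = 0
    · refine ⟨∅, MeasurableSet.empty, Set.empty_subset _, ?_, fun _ h => absurd hR h⟩
      simpa [Set.indicator_empty] using (show (fun _ => (0:ℝ)) ∈ A from h0)
    by_cases hRm : MeasurableSet R
    swap
    · refine ⟨∅, MeasurableSet.empty, Set.empty_subset _, ?_, fun h _ => absurd h hRm⟩
      simpa [Set.indicator_empty] using (show (fun _ => (0:ℝ)) ∈ A from h0)
    obtain ⟨X, hXA, hP⟩ := gam_pick (P := P) (A := A) hR c
    have hmk := hL0 X hXA
    refine ⟨R ∩ {ω | (c : ℝ) < hmk.mk X ω}, hRm.inter (measurableSet_lt measurable_const hmk.measurable_mk),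
      Set.inter_subset_left, ?_, ?_⟩
    · refine hsolid X hXA _ ?_
      filter_upwards [hpos X hXA, hmk.ae_eq_mk] with ω hω heq
      by_cases hmem : ω ∈ R ∩ {ω | (c : ℝ) < hmk.mk X ω}
      · rw [Set.indicator_of_mem hmem]
        have : (c : ℝ) < X ω := by rw [heq]; exact hmem.2
        exact ⟨by positivity, this.le⟩
      · rw [Set.indicator_of_notMem hmem]
        exact ⟨le_refl 0, hω⟩
    · intro _ _
      have hsame : P (R ∩ {ω | (c : ℝ) < hmk.mk X ω}) = P (R ∩ {ω | (c : ℝ) < X ω}) := by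
        refine measure_congr ?_
        have : {ω | (c : ℝ) < hmk.mk X ω} =ᵐ[P] {ω | (c : ℝ) < X ω} := by
          filter_upwards [hmk.ae_eq_mk] with ω heq
          have hiff : ((c:ℝ) < AEMeasurable.mk X hmk ω) ↔ ((c:ℝ) < X ω) := by rw [heq]
          exact propext hiff
        exact (Filter.EventuallyEq.refl _ _).inter this
      rw [hsame]
      exact hP.le
  choose Dch hDchm hDchsub hDchA hDchP using step
  -- Stage 2 : on `Ωu`, arbitrarily large multiples of indicators of almost-full sets are in `A`
  have stage2 : ∀ L : ℕ, ∀ δ : ℝ≥0∞, δ ≠ 0 → ∃ D : Set Ω, MeasurableSet D ∧ D ⊆ Ωu ∧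
      P (Ωu \ D) < δ ∧ Set.indicator D (fun _ => (L : ℝ)) ∈ A := by
    intro L δ hδ
    set b : ℕ → ℕ := fun i => L * 2 ^ (i + 2) with hbdef
    set R : ℕ → Set Ω := fun n => Nat.rec Ωu (fun i Ri => Ri \ Dch (b i) Ri) n with hRdef
    have hRsucc : ∀ i, R (i + 1) = R i \ Dch (b i) (R i) := fun i => rfl
    set Dk : ℕ → Set Ω := fun i => Dch (b i) (R i) with hDkdef
    have hRm : ∀ i, MeasurableSet (R i) := by
      intro i
      induction i with
      | zero => exact hΩum
      | succ i ih => exact ih.diff (hDchm _ _)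
    have hRanti : ∀ i j, i ≤ j → R j ⊆ R i := by
      intro i j hij
      induction j with
      | zero => rw [Nat.le_zero.mp hij]
      | succ j ih =>
        rcases Nat.lt_or_ge i (j+1) with h | h
        · exact (Set.diff_subset).trans (ih (by omega))
        · rw [Nat.le_antisymm hij h]
    have hRsub : ∀ i, R i ⊆ Ωu := fun i => hRanti 0 i (Nat.zero_le i)
    have hex : ∃ k, P (R k) < δ := by
      by_contra hk
      push_neg at hk
      have hdir : Directed (fun x1 x2 => x1 ⊇ x2) R := by
        intro m n
        exact ⟨max m n, hRanti m _ (le_max_left m n), hRanti n _ (le_max_right m n)⟩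
      have hinter : P (⋂ k, R k) = ⨅ k, P (R k) :=
        Antitone.measure_iInter (fun i j h => hRanti i j h) (fun k => (hRm k).nullMeasurableSet) ⟨0, measure_ne_top P _⟩
      have hPinf : P (⋂ k, R k) ≠ 0 := by
        rw [hinter]
        intro h
        exact hδ (le_antisymm ((le_iInf hk).trans_eq h) (zero_le))
      have hc : gam P A (⋂ k, R k) ≠ 0 :=
        hher _ (MeasurableSet.iInter hRm) ((Set.iInter_subset R 0).trans (hRsub 0)) hPinf
      have hγR : ∀ i, gam P A (⋂ k, R k) ≤ gam P A (R i) := fun i => gam_mono (Set.iInter_subset R i)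
      have hγRne : ∀ i, gam P A (R i) ≠ 0 := fun i h =>
        hc (le_antisymm ((hγR i).trans_eq h) (zero_le))
      have hPD : ∀ i, gam P A (⋂ k, R k) / 2 ≤ P (Dk i) := by
        intro i
        refine le_trans ?_ (hDchP (b i) (R i) (hRm i) (hγRne i))
        exact ENNReal.div_le_div_right (hγR i) 2
      have hdisj : Pairwise (Function.onFun Disjoint Dk) := by
        intro i j hij
        rcases hij.lt_or_gt with h | h
        · have : Dk j ⊆ R (i + 1) := (hDchsub _ _).trans (hRanti (i+1) j h)
          rw [hRsucc i] at this
          exact Disjoint.symm (Set.disjoint_of_subset_left this disjoint_sdiff_left)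
        · have : Dk i ⊆ R (j + 1) := (hDchsub _ _).trans (hRanti (j+1) i h)
          rw [hRsucc j] at this
          exact Set.disjoint_of_subset_left this disjoint_sdiff_left
      have htop : (⊤ : ℝ≥0∞) ≤ P (⋃ i, Dk i) := by
        rw [measure_iUnion hdisj (fun i => hDchm _ _)]
        refine le_trans ?_ (ENNReal.tsum_le_tsum hPD)
        have h2 : gam P A (⋂ k, R k) / 2 ≠ 0 := by
          simp only [ne_eq, ENNReal.div_eq_zero_iff, not_or]
          exact ⟨hc, by simp⟩
        rw [ENNReal.tsum_const_eq_top_of_ne_zero h2]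
      exact absurd (htop.trans (measure_mono (Set.subset_univ _))) (by simp [measure_univ])
    obtain ⟨k, hk⟩ := hex
    have hEk' : ∀ m, Ωu \ R m = ⋃ i ∈ Finset.range m, Dk i := by
      intro m
      induction m with
      | zero =>
        simp only [Finset.range_zero]
        rw [show R 0 = Ωu from rfl]
        simp
      | succ m ih =>
        rw [hRsucc m, Set.diff_diff_right, ih, Finset.range_add_one, Finset.set_biUnion_insert]
        rw [Set.inter_eq_self_of_subset_right ((hDchsub _ _).trans (hRsub m))]
        rw [Set.union_comm]
    have hEk := hEk' k
    refine ⟨Ωu \ R k, hΩum.diff (hRm k), Set.diff_subset, ?_, ?_⟩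
    · rw [Set.diff_diff_cancel_left (hRsub k)]
      exact hk
    · -- convex combination
      set w : ℕ → ℝ := fun i => (2 : ℝ)⁻¹ ^ (i + 2) with hwdef
      have hwsum : ∀ m : ℕ, ∑ i ∈ Finset.range m, w i = 2⁻¹ - 2⁻¹ ^ (m + 1) := by
        intro m
        induction m with
        | zero => simp
        | succ m ih => rw [Finset.sum_range_succ, ih, hwdef]; ring
      have hwle : ∑ i ∈ Finset.range k, w i ≤ 1 := by
        rw [hwsum]
        have : (0:ℝ) ≤ 2⁻¹ ^ (k + 1) := by positivity
        linarith
      set w' : ℕ → ℝ := fun i => if i < k then w i else 1 - ∑ j ∈ Finset.range k, w j with hw'def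
      set f' : ℕ → Ω → ℝ := fun i => if i < k then Set.indicator (Dk i) (fun _ => ((b i : ℕ) : ℝ)) else 0 with hf'def
      have hw'nonneg : ∀ i ∈ Finset.range (k+1), 0 ≤ w' i := by
        intro i _
        rw [hw'def]
        by_cases h : i < k
        · simp only [h, if_true]; positivity
        · simp only [h, if_false]; linarith
      have hw'sum : ∑ i ∈ Finset.range (k+1), w' i = 1 := by
        rw [Finset.sum_range_succ]
        have h1 : ∑ i ∈ Finset.range k, w' i = ∑ i ∈ Finset.range k, w i := by
          refine Finset.sum_congr rfl fun i hi => ?_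
          rw [hw'def]
          simp [Finset.mem_range.mp hi]
        rw [h1, hw'def]
        simp
      have hf'mem : ∀ i ∈ Finset.range (k+1), f' i ∈ A := by
        intro i _
        rw [hf'def]
        by_cases h : i < k
        · simp only [h, if_true]
          exact hDchA _ _
        · simp only [h, if_false]
          exact h0
      have hgA : (∑ i ∈ Finset.range (k+1), w' i • f' i) ∈ A :=
        hconv.sum_mem hw'nonneg hw'sum hf'mem
      refine hsolid _ hgA _ (Filter.Eventually.of_forall fun ω => ?_)
      have hterm_nonneg : ∀ i ∈ Finset.range (k+1), 0 ≤ (w' i • f' i) ω := by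
        intro i hi
        rw [Pi.smul_apply, smul_eq_mul]
        refine mul_nonneg (hw'nonneg i hi) ?_
        rw [hf'def]
        by_cases h : i < k
        · simp only [h, if_true]
          exact Set.indicator_nonneg (fun _ _ => by positivity) ω
        · simp only [h, if_false, Pi.zero_apply]; exact le_refl 0
      have hsum_nonneg : 0 ≤ (∑ i ∈ Finset.range (k+1), w' i • f' i) ω := by
        rw [Finset.sum_apply]
        exact Finset.sum_nonneg hterm_nonneg
      constructor
      · exact Set.indicator_nonneg (fun _ _ => by positivity) ω
      · by_cases hmem : ω ∈ Ωu \ R k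
        · rw [Set.indicator_of_mem hmem]
          rw [hEk] at hmem
          simp only [Set.mem_iUnion, Finset.mem_range, exists_prop] at hmem
          obtain ⟨i, hik, hωi⟩ := hmem
          have hsingle : w' i * f' i ω ≤ (∑ j ∈ Finset.range (k+1), w' j • f' j) ω := by
            rw [Finset.sum_apply]
            have h4 := Finset.single_le_sum (f := fun j => (w' j • f' j) ω) hterm_nonneg
              (Finset.mem_range.mpr (by omega : i < k + 1))
            simpa using h4
          refine le_trans ?_ hsingle
          simp only [hw'def, hf'def, hwdef, hbdef, hik, if_true]
          rw [Set.indicator_of_mem hωi]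
          push_cast
          have h2 : (2:ℝ)⁻¹ ^ (i+2) * 2 ^ (i+2) = 1 := by
            rw [← mul_pow]
            norm_num
          nlinarith [h2]
        · rw [Set.indicator_of_notMem hmem]
          exact hsum_nonneg
  -- Stage 3 : assemble a set whose indicator has arbitrarily large multiples in `A`
  have h2inv : ∀ n : ℕ, (P Ωu * 2⁻¹ ^ (n + 2) : ℝ≥0∞) ≠ 0 := by
    intro n
    refine mul_ne_zero hPΩu (pow_ne_zero _ ?_)
    simp
  choose D hDm2 hDsub2 hDP2 hDA2 using fun n : ℕ => stage2 (n+1) (P Ωu * 2⁻¹ ^ (n+2)) (h2inv n)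
  have hsum : ∑' n : ℕ, (P Ωu * 2⁻¹ ^ (n + 2) : ℝ≥0∞) = P Ωu * 2⁻¹ := by
    rw [ENNReal.tsum_mul_left]
    congr 1
    calc ∑' n : ℕ, ((2:ℝ≥0∞)⁻¹ ^ (n+2)) = ∑' n : ℕ, (2:ℝ≥0∞)⁻¹ ^ n * 2⁻¹ ^ 2 :=
          tsum_congr fun n => by rw [← pow_add]
      _ = (∑' n : ℕ, (2:ℝ≥0∞)⁻¹ ^ n) * 2⁻¹ ^ 2 := ENNReal.tsum_mul_right
      _ = 2⁻¹ := by
          rw [ENNReal.tsum_geometric, ENNReal.one_sub_inv_two, inv_inv, pow_two, ← mul_assoc,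
            ENNReal.mul_inv_cancel (by norm_num) (by norm_num), one_mul]
  set Dinf : Set Ω := ⋂ n, D n with hDinfdef
  have hPdiff : P (Ωu \ Dinf) ≤ P Ωu * 2⁻¹ := by
    have hsub : Ωu \ Dinf ⊆ ⋃ n, (Ωu \ D n) := by
      rw [hDinfdef, Set.diff_iInter]
    refine (measure_mono hsub).trans ((measure_iUnion_le _).trans ?_)
    exact le_trans (ENNReal.tsum_le_tsum fun n => (hDP2 n).le) hsum.le
  have hPDinf : P Dinf ≠ 0 := by
    intro h
    have h1 : P Ωu ≤ P (Ωu \ Dinf) + P Dinf := by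
      refine (measure_mono ?_).trans (measure_union_le _ _)
      intro ω hω
      by_cases hd : ω ∈ Dinf
      · exact Or.inr hd
      · exact Or.inl ⟨hω, hd⟩
    rw [h, add_zero] at h1
    have h2 : P Ωu * 2⁻¹ < P Ωu := by
      have := ENNReal.half_lt_self hPΩu (measure_ne_top P Ωu)
      rwa [ENNReal.div_eq_inv_mul, mul_comm] at this
    exact absurd (h1.trans hPdiff) (not_le.mpr h2)
  set Xi : Ω → ℝ := Set.indicator Dinf (fun _ => (1:ℝ)) with hXidef
  have hXiA : Xi ∈ A := by
    refine hsolid _ (hDA2 0) _ (Filter.Eventually.of_forall fun ω => ?_)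
    constructor
    · exact Set.indicator_nonneg (fun _ _ => by norm_num) ω
    · by_cases hd : ω ∈ Dinf
      · rw [hXidef, Set.indicator_of_mem hd, Set.indicator_of_mem (Set.iInter_subset D 0 hd)]
        norm_num
      · rw [hXidef, Set.indicator_of_notMem hd]
        exact Set.indicator_nonneg (fun _ _ => by positivity) ω
  have hXsupp : {ω | 0 < Xi ω} = Dinf := by
    ext ω
    simp only [Set.mem_setOf_eq, hXidef]
    by_cases hd : ω ∈ Dinf
    · simp [Set.indicator_of_mem hd, hd]
    · simp [Set.indicator_of_notMem hd, hd]
  obtain ⟨Λ, hΛpos, hl⟩ := hrb Xi hXiA (by rw [hXsupp]; exact hPDinf)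
  set l : ℝ := max Λ 0 + 1 with hldef
  have hmax0 : (0:ℝ) ≤ max Λ 0 := le_max_right Λ 0
  have hlΛ : Λ < l := lt_of_le_of_lt (le_max_left Λ 0) (lt_add_one _)
  have hl0 : (0:ℝ) ≤ l := by rw [hldef]; linarith
  set n : ℕ := ⌈l⌉₊ with hndef
  have hln : l ≤ (n:ℝ) + 1 := (Nat.le_ceil l).trans (by rw [hndef]; linarith)
  refine hl l hlΛ (hsolid _ (hDA2 n) _ (Filter.Eventually.of_forall fun ω => ?_))
  constructor
  · by_cases hd : ω ∈ Dinf
    · rw [hXidef, Set.indicator_of_mem hd]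
      simpa using hl0
    · rw [hXidef, Set.indicator_of_notMem hd]
      simp
  · by_cases hd : ω ∈ Dinf
    · rw [hXidef, Set.indicator_of_mem hd, Set.indicator_of_mem (Set.iInter_subset D n hd)]
      push_cast
      linarith
    · rw [hXidef, Set.indicator_of_notMem hd]
      have hnn : (0:ℝ) ≤ Set.indicator (D n) (fun _ => ((n+1 : ℕ):ℝ)) ω :=
        Set.indicator_nonneg (fun _ _ => by positivity) ω
      simpa using hnn

end Stmt1Aux

namespace Stmt1Aux
open Set ENNReal

theorem tight_closure (P : Measure Ω) [IsProbabilityMeasure P] (A : Set (Ω → ℝ))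
    (h : TightPos P A) : TightPos P {X | InClosure P A X} := by
  intro ε hε
  obtain ⟨M, hM, hA⟩ := h (ε/2) (by positivity)
  refine ⟨2*M, by positivity, ?_⟩
  rintro X ⟨Y, hY, hTend⟩
  have key : ∀ n, P {ω | 2*M < X ω} ≤
      ENNReal.ofReal (ε/2) + P {ω | M ≤ dist (Y n ω) (X ω)} := by
    intro n
    have hsub : {ω | 2*M < X ω} ⊆ {ω | M < Y n ω} ∪ {ω | M ≤ dist (Y n ω) (X ω)} := by
      intro ω hω
      simp only [Set.mem_setOf_eq] at hω
      by_cases hy : M < Y n ω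
      · exact Or.inl hy
      · push_neg at hy
        right
        rw [Set.mem_setOf_eq, Real.dist_eq, abs_sub_comm, abs_of_nonneg (by linarith)]
        linarith
    refine (measure_mono hsub).trans ((measure_union_le _ _).trans ?_)
    exact add_le_add (hA _ (hY n)).le le_rfl
  have hTend' : Tendsto (fun n => P {ω | M ≤ dist (Y n ω) (X ω)}) atTop (nhds 0) := by
    have := hTend (ENNReal.ofReal M) (ENNReal.ofReal_pos.2 hM)
    simpa only [edist_dist, ENNReal.ofReal_le_ofReal_iff, dist_nonneg] using this
  have hlim : Tendsto (fun n => ENNReal.ofReal (ε/2) + P {ω | M ≤ dist (Y n ω) (X ω)})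
      atTop (nhds (ENNReal.ofReal (ε/2))) := by
    have := Tendsto.add (tendsto_const_nhds (x := ENNReal.ofReal (ε/2)) (f := atTop)) hTend'
    simpa using this
  have hle : P {ω | 2*M < X ω} ≤ ENNReal.ofReal (ε/2) := ge_of_tendsto' hlim key
  refine hle.trans_lt ?_
  rw [ENNReal.ofReal_lt_ofReal_iff hε]
  linarith

end Stmt1Aux

/-- If `A ⊆ L⁰₊` is convex, solid and radially bounded, then its closure in probability
is radially bounded. -/
theorem stmt1 (P : Measure Ω) [IsProbabilityMeasure P] (A : Set (Ω → ℝ))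
    (hL0 : ∀ X ∈ A, AEMeasurable X P) (hpos : ∀ X ∈ A, ∀ᵐ ω ∂P, 0 ≤ X ω)
    (hconv : Convex ℝ A) (hsolid : Solid P A) (hrb : RadiallyBoundedPos P A) :
    RadiallyBoundedPos P {X | InClosure P A X} := by
  have htight : TightPos P {X | InClosure P A X} :=
    Stmt1Aux.tight_closure P A (Stmt1Aux.key_tight P A hL0 hpos hconv hsolid hrb)
  intro X hX hne
  have hcover : {ω | 0 < X ω} = ⋃ k : ℕ, {ω | (1:ℝ)/(k+1) < X ω} := by
    ext ω
    simp only [Set.mem_setOf_eq, Set.mem_iUnion]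
    constructor
    · intro h
      obtain ⟨k, hk⟩ := exists_nat_one_div_lt h
      exact ⟨k, by exact_mod_cast hk⟩
    · rintro ⟨k, hk⟩
      have : (0:ℝ) < 1/(k+1) := by positivity
      linarith
  have hk : ∃ k : ℕ, P {ω | (1:ℝ)/(k+1) < X ω} ≠ 0 := by
    by_contra hall
    push_neg at hall
    rw [hcover] at hne
    exact hne (measure_iUnion_null hall)
  obtain ⟨k, hk⟩ := hk
  set α : ℝ := 1/(k+1) with hαdef
  have hα : 0 < α := by rw [hαdef]; positivity
  set p := P {ω | α < X ω} with hpdef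
  have hptop : p ≠ ⊤ := (measure_ne_top P _)
  have hp' : 0 < p.toReal := ENNReal.toReal_pos hk hptop
  obtain ⟨M, hM, hAll⟩ := htight p.toReal hp'
  refine ⟨M / α, by positivity, fun l hlgt hmem => ?_⟩
  have hl0 : 0 < l := lt_trans (by positivity) hlgt
  have h1 := hAll _ hmem
  rw [ENNReal.ofReal_toReal hptop] at h1
  have hsub : {ω | α < X ω} ⊆ {ω | M < l * X ω} := by
    intro ω hω
    simp only [Set.mem_setOf_eq] at hω ⊢
    have h2 : M < l * α := by
      rw [div_lt_iff₀ hα] at hlgt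
      linarith
    have h3 : l * α ≤ l * X ω := by nlinarith
    linarith
  have h4 : p ≤ P {ω | M < l * X ω} := measure_mono hsub
  exact absurd (lt_of_le_of_lt h4 h1) (lt_irrefl p)
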